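/- Let G be a finite group, H ⊴ G with abelian quotient K, and χ an irreducible character of G. Define 𝓕Ω_χ(ξ₁,ξ₂) = (χ(1)/|G|²) · Σ_{x,y ∈ G} ξ₁(x) ξ₂(y) χ([x,y]) for ξ₁, ξ₂ ∈ Irr(K) (viewed as characters of G via the quotient). Then 𝓕Ω_χ(ξ₁,ξ₂) = 0 unless both ξ₁ and ξ₂ stabilize χ (i.e., ξᵢχ = χ). -/

import Mathlib

open scoped Classical

noncomputable section

open CategoryTheory LinearMap

section Aux

variable {G : Type} [Group G]

/-- An invariant submodule of a simple `FDRep` is `⊥` or `⊤`. -/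
lemma FDRep.submodule_bot_or_top (V : FDRep ℂ G) (hs : Simple V) (W : Submodule ℂ V)
    (hW : ∀ g : G, ∀ v ∈ W, V.ρ g v ∈ W) : W = ⊥ ∨ W = ⊤ := by
  by_cases hbot : W = ⊥
  · exact Or.inl hbot
  right
  let ρW : Representation ℂ G W :=
    { toFun := fun g => (V.ρ g).restrict (hW g)
      map_one' := by ext x; simp
      map_mul' := by intro g h; ext x; simp }
  let U : FDRep ℂ G := FDRep.of ρW
  let ι : U ⟶ V := ⟨FGModuleCat.ofHom W.subtype, fun g => rfl⟩
  haveI : Mono ι := ConcreteCategory.mono_of_injective ι Subtype.val_injective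
  haveI := hs
  have hne : ι ≠ 0 := by
    intro h0
    obtain ⟨w, hwW, hw0⟩ := (Submodule.ne_bot_iff W).1 hbot
    have h0' : ι.hom = 0 := by rw [h0]; rfl
    have : W.subtype ⟨w, hwW⟩ = 0 := by
      show ι.hom ⟨w, hwW⟩ = 0
      rw [h0']; rfl
    exact hw0 this
  haveI : IsIso ι := isIso_of_mono_of_nonzero hne
  have hsurj : Function.Surjective ((forget (FDRep ℂ G)).map ι) :=
    (ConcreteCategory.bijective_of_isIso ι).2
  rw [Submodule.eq_top_iff']
  intro v
  obtain ⟨w, hw⟩ := hsurj v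
  have hu : ∃ u : W, u.1 = v := ⟨w, hw⟩
  obtain ⟨u, hu⟩ := hu
  exact hu ▸ u.2

/-- Twisted Schur: a nonzero `T` intertwining `ρ` with `ξ • ρ` forces `ξ` to
stabilize the character. -/
lemma stab_of_intertwiner (V : FDRep ℂ G) (hs : Simple V) (ξ : G →* ℂ)
    (T : V →ₗ[ℂ] V) (hT : T ≠ 0)
    (hcomm : ∀ g : G, T * V.ρ g = ξ g • (V.ρ g * T)) :
    ∀ g : G, ξ g * V.character g = V.character g := by
  have hξ : ∀ g : G, ξ g ≠ 0 := fun g h0 => by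
    have : ξ g * ξ g⁻¹ = 1 := by rw [← map_mul]; simp
    rw [h0, zero_mul] at this; exact zero_ne_one this
  -- kernel is invariant
  have hker : ∀ g : G, ∀ v ∈ ker T, V.ρ g v ∈ ker T := by
    intro g v hv
    have h := DFunLike.congr_fun (hcomm g) v
    simp only [LinearMap.smul_apply, Module.End.mul_apply] at h
    rw [mem_ker] at hv ⊢
    rw [h, hv, map_zero, smul_zero]
  -- range is invariant
  have hrange : ∀ g : G, ∀ v ∈ range T, V.ρ g v ∈ range T := by
    rintro g _ ⟨v, rfl⟩
    have h := DFunLike.congr_fun (hcomm g) v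
    simp only [LinearMap.smul_apply, Module.End.mul_apply] at h
    have h2 : V.ρ g (T v) = (ξ g)⁻¹ • T (V.ρ g v) := by
      rw [h, smul_smul, inv_mul_cancel₀ (hξ g), one_smul]
    rw [h2]
    exact Submodule.smul_mem _ _ ⟨_, rfl⟩
  have hker' : ker T = ⊥ := by
    rcases V.submodule_bot_or_top hs (ker T) hker with h | h
    · exact h
    · exact absurd (ker_eq_top.1 h) hT
  have hrange' : range T = ⊤ := by
    rcases V.submodule_bot_or_top hs (range T) hrange with h | h
    · exact absurd (range_eq_bot.1 h) hT
    · exact h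
  have hbij : Function.Bijective T :=
    ⟨ker_eq_bot.1 hker', range_eq_top.1 hrange'⟩
  let e := LinearEquiv.ofBijective T hbij
  have hTS : T * (e.symm : V →ₗ[ℂ] V) = 1 := by
    ext v; exact e.apply_symm_apply v
  intro g
  have key : V.character g = ξ g * V.character g := by
    have h1 : (e.symm : V →ₗ[ℂ] V) * (T * V.ρ g) = V.ρ g := by
      ext v; exact e.symm_apply_apply _
    calc V.character g = LinearMap.trace ℂ V (V.ρ g) := rfl
      _ = LinearMap.trace ℂ V ((e.symm : V →ₗ[ℂ] V) * (T * V.ρ g)) := by rw [h1]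
      _ = LinearMap.trace ℂ V ((e.symm : V →ₗ[ℂ] V) * (ξ g • (V.ρ g * T))) := by
            rw [hcomm g]
      _ = ξ g * LinearMap.trace ℂ V ((e.symm : V →ₗ[ℂ] V) * (V.ρ g * T)) := by
            rw [mul_smul_comm, map_smul]; rfl
      _ = ξ g * LinearMap.trace ℂ V ((V.ρ g * T) * (e.symm : V →ₗ[ℂ] V)) := by
            rw [trace_mul_comm]
      _ = ξ g * LinearMap.trace ℂ V (V.ρ g) := by
            rw [mul_assoc, hTS, mul_one]
  exact key.symm

variable [Fintype G]

/-- The averaging operator. -/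
def Pavg (V : FDRep ℂ G) (ξ : G →* ℂ) (A : V →ₗ[ℂ] V) : V →ₗ[ℂ] V :=
  ∑ y : G, ξ y • (V.ρ y * A * V.ρ y⁻¹)

lemma Pavg_comm (V : FDRep ℂ G) (ξ : G →* ℂ) (A : V →ₗ[ℂ] V) (g : G) :
    Pavg V ξ A * V.ρ g = ξ g • (V.ρ g * Pavg V ξ A) := by
  unfold Pavg
  rw [Finset.sum_mul, Finset.mul_sum, Finset.smul_sum]
  apply Fintype.sum_equiv (Equiv.mulLeft g⁻¹)
  intro y
  simp only [Equiv.coe_mulLeft]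
  have h1 : ξ g * ξ (g⁻¹ * y) = ξ y := by rw [← map_mul, mul_inv_cancel_left]
  have h2 : V.ρ y * A * V.ρ y⁻¹ * V.ρ g = V.ρ y * A * V.ρ (y⁻¹ * g) := by
    rw [mul_assoc (V.ρ y * A), ← map_mul]
  have h3 : V.ρ g * (V.ρ (g⁻¹ * y) * A * V.ρ (g⁻¹ * y)⁻¹) =
      V.ρ y * A * V.ρ (y⁻¹ * g) := by
    have h4 : V.ρ g * V.ρ (g⁻¹ * y) = V.ρ y := by rw [← map_mul, mul_inv_cancel_left]
    rw [mul_inv_rev, inv_inv, ← mul_assoc, ← mul_assoc, h4]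
  rw [smul_mul_assoc, mul_smul_comm, smul_smul, h1, h2, h3]

end Aux

def IsIrredChar (G : Type) [Group G] (χ : G → ℂ) : Prop :=
  ∃ V : FDRep ℂ G, CategoryTheory.Simple V ∧ ∀ g : G, χ g = V.character g

/-- `𝓕Ω_χ(ξ₁,ξ₂) = (χ(1)/|G|²) Σ_{x,y} ξ₁(x) ξ₂(y) χ([x,y])`. -/
def FOmega {G : Type} [Group G] [Fintype G] (χ : G → ℂ) (ξ₁ ξ₂ : G →* ℂ) : ℂ :=
  (χ 1 / (Fintype.card G : ℂ) ^ 2) *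
    ∑ x : G, ∑ y : G, ξ₁ x * ξ₂ y * χ (x * y * x⁻¹ * y⁻¹)

theorem FOmega_eq_zero_of_not_stab {G : Type} [Group G] [Fintype G]
    (H : Subgroup G) [H.Normal]
    (hab : ∀ a b : G, a * b * a⁻¹ * b⁻¹ ∈ H)
    (χ : G → ℂ) (hχ : IsIrredChar G χ)
    (ξ₁ ξ₂ : G →* ℂ) (h₁ : ∀ h ∈ H, ξ₁ h = 1) (h₂ : ∀ h ∈ H, ξ₂ h = 1)
    (hne : FOmega χ ξ₁ ξ₂ ≠ 0) :
    (∀ g : G, ξ₁ g * χ g = χ g) ∧ (∀ g : G, ξ₂ g * χ g = χ g) := by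
  obtain ⟨V, hs, hchar⟩ := hχ
  have hS : (∑ x : G, ∑ y : G, ξ₁ x * ξ₂ y * χ (x * y * x⁻¹ * y⁻¹)) ≠ 0 := by
    intro h0; exact hne (by rw [FOmega, h0, mul_zero])
  -- trace computations
  have key2 : ∀ x : G, LinearMap.trace ℂ V (V.ρ x * Pavg V ξ₂ (V.ρ x⁻¹)) =
      ∑ y : G, ξ₂ y * χ (x * y * x⁻¹ * y⁻¹) := by
    intro x
    unfold Pavg
    rw [Finset.mul_sum, map_sum]
    apply Finset.sum_congr rfl
    intro y _
    rw [mul_smul_comm, map_smul, smul_eq_mul, hchar]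
    have hmul : V.ρ x * (V.ρ y * V.ρ x⁻¹ * V.ρ y⁻¹) = V.ρ (x * y * x⁻¹ * y⁻¹) := by
      simp only [map_mul, mul_assoc]
    rw [hmul]
    rfl
  have key1 : ∀ y : G, LinearMap.trace ℂ V (Pavg V ξ₁ (V.ρ y) * V.ρ y⁻¹) =
      ∑ x : G, ξ₁ x * χ (x * y * x⁻¹ * y⁻¹) := by
    intro y
    unfold Pavg
    rw [Finset.sum_mul, map_sum]
    apply Finset.sum_congr rfl
    intro x _
    rw [smul_mul_assoc, map_smul, smul_eq_mul, hchar]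
    have hmul : V.ρ x * V.ρ y * V.ρ x⁻¹ * V.ρ y⁻¹ = V.ρ (x * y * x⁻¹ * y⁻¹) := by
      simp only [map_mul]
    rw [hmul]
    rfl
  constructor
  · -- ξ₁
    have hx : ∃ y : G, Pavg V ξ₁ (V.ρ y) ≠ 0 := by
      by_contra hall
      push_neg at hall
      apply hS
      rw [Finset.sum_comm]
      apply Finset.sum_eq_zero
      intro y _
      have : (∑ x : G, ξ₁ x * χ (x * y * x⁻¹ * y⁻¹)) = 0 := by
        rw [← key1 y, hall y, zero_mul, map_zero]
      calc (∑ x : G, ξ₁ x * ξ₂ y * χ (x * y * x⁻¹ * y⁻¹))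
          = ξ₂ y * ∑ x : G, ξ₁ x * χ (x * y * x⁻¹ * y⁻¹) := by
            rw [Finset.mul_sum]; apply Finset.sum_congr rfl; intros; ring
        _ = 0 := by rw [this, mul_zero]
    obtain ⟨y, hy⟩ := hx
    intro g
    rw [hchar g]
    exact stab_of_intertwiner V hs ξ₁ _ hy (Pavg_comm V ξ₁ (V.ρ y)) g
  · -- ξ₂
    have hx : ∃ x : G, Pavg V ξ₂ (V.ρ x⁻¹) ≠ 0 := by
      by_contra hall
      push_neg at hall
      apply hS
      apply Finset.sum_eq_zero
      intro x _
      have : (∑ y : G, ξ₂ y * χ (x * y * x⁻¹ * y⁻¹)) = 0 := by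
        rw [← key2 x, hall x, mul_zero, map_zero]
      calc (∑ y : G, ξ₁ x * ξ₂ y * χ (x * y * x⁻¹ * y⁻¹))
          = ξ₁ x * ∑ y : G, ξ₂ y * χ (x * y * x⁻¹ * y⁻¹) := by
            rw [Finset.mul_sum]; apply Finset.sum_congr rfl; intros; ring
        _ = 0 := by rw [this, mul_zero]
    obtain ⟨x, hx⟩ := hx
    intro g
    rw [hchar g]
    exact stab_of_intertwiner V hs ξ₂ _ hx (Pavg_comm V ξ₂ (V.ρ x⁻¹)) g
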